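/- The twisted character is the t = −1 specialization of the Hall–Littlewood polynomial: for a strict partition λ with k parts, Σ_{ω∈S_k} ω·( x_1^{λ_1}⋯x_k^{λ_k} · ∏_{1≤i<j≤k} (x_i + x_j)/(x_i − x_j) ) = s_{λ−δ}(x_1,…,x_k)·s_δ(x_1,…,x_k), as an identity of rational functions in x_1,…,x_k (the permutation ω acting by permuting the variables). -/

import Mathlib

open MvPolynomial
open Finset Equiv

set_option maxHeartbeats 1000000
set_option synthInstance.maxHeartbeats 400000

section Aux
variable {k : ℕ} {R : Type*} [CommRing R]

lemma myPairs (g : Fin k → Fin k → R) :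
    ∏ pr ∈ Finset.univ.filter (fun pr : Fin k × Fin k => pr.1 < pr.2), g pr.1 pr.2
      = ∏ i, ∏ j ∈ Finset.Ioi i, g i j := by
  rw [Finset.prod_filter, Fintype.prod_prod_type]
  refine Finset.prod_congr rfl fun i _ => ?_
  rw [← Finset.prod_filter]
  congr 1
  ext j; simp

lemma myVmA (f : Fin k → R) (ω : Equiv.Perm (Fin k)) :
    ∏ i, ∏ j ∈ Finset.Ioi i, (f (ω j) - f (ω i))
      = ((Equiv.Perm.sign ω : ℤ) : R) * ∏ i, ∏ j ∈ Finset.Ioi i, (f j - f i) := by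
  have h := Matrix.det_permute ω (Matrix.vandermonde f)
  have h2 : (Matrix.vandermonde f).submatrix ω id = Matrix.vandermonde (f ∘ ω) := rfl
  rw [h2, Matrix.det_vandermonde, Matrix.det_vandermonde] at h
  simpa using h

lemma mySprod (h : Fin k → R) :
    ∏ pr ∈ Finset.univ.filter (fun pr : Fin k × Fin k => pr.1 < pr.2), (h pr.1 - h pr.2)
      = ((Equiv.Perm.sign (Fin.revPerm (n := k)) : ℤ) : R) * ∏ i, ∏ j ∈ Finset.Ioi i, (h j - h i) := by
  rw [← myVmA h Fin.revPerm, ← myPairs (fun i j => h (Fin.revPerm j) - h (Fin.revPerm i))]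
  refine Finset.prod_nbij' (fun pr => ((pr.2 : Fin k).rev, (pr.1 : Fin k).rev))
    (fun pr => ((pr.2 : Fin k).rev, (pr.1 : Fin k).rev)) ?_ ?_ ?_ ?_ ?_
  · intro a ha; simp only [Finset.mem_filter, Finset.mem_univ, true_and] at ha ⊢
    exact Fin.rev_lt_rev.mpr ha
  · intro a ha; simp only [Finset.mem_filter, Finset.mem_univ, true_and] at ha ⊢
    exact Fin.rev_lt_rev.mpr ha
  · intro a _; simp
  · intro a _; simp
  · intro a _; simp

lemma myPermS (f : Fin k → R) (ω : Equiv.Perm (Fin k)) :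
    ∏ pr ∈ Finset.univ.filter (fun pr : Fin k × Fin k => pr.1 < pr.2), (f (ω pr.1) - f (ω pr.2))
      = ((Equiv.Perm.sign ω : ℤ) : R) *
        ∏ pr ∈ Finset.univ.filter (fun pr : Fin k × Fin k => pr.1 < pr.2), (f pr.1 - f pr.2) := by
  rw [mySprod (fun i => f (ω i)), mySprod f, myVmA f ω]
  ring

lemma myAltDet (f : Fin k → R) (μ : Fin k → ℕ) :
    ∑ ω : Equiv.Perm (Fin k), ((Equiv.Perm.sign ω : ℤ) : R) * ∏ j, f (ω j) ^ (μ j)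
      = Matrix.det (Matrix.of fun i j : Fin k => f i ^ (μ j)) := by
  rw [Matrix.det_apply]
  refine (Finset.sum_congr rfl fun ω _ => ?_).symm
  simp [Units.smul_def, zsmul_eq_mul]

lemma myDeltaProd (f : Fin k → R) :
    ∑ ω : Equiv.Perm (Fin k), ((Equiv.Perm.sign ω : ℤ) : R) * ∏ j, f (ω j) ^ (k - 1 - (j : ℕ))
      = ∏ pr ∈ Finset.univ.filter (fun pr : Fin k × Fin k => pr.1 < pr.2), (f pr.1 - f pr.2) := by
  rw [myAltDet, mySprod f]
  have h2 : (Matrix.of fun i j : Fin k => f i ^ (k - 1 - (j : ℕ)))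
      = (Matrix.vandermonde f).submatrix id Fin.revPerm := by
    ext i j
    simp only [Matrix.of_apply, Matrix.submatrix_apply, Matrix.vandermonde_apply, id,
      Fin.revPerm_apply, Fin.val_rev]
    congr 1
    omega
  rw [h2, Matrix.det_permute', Matrix.det_vandermonde]

lemma myDeltaProd2 (f : Fin k → R) :
    ∑ ω : Equiv.Perm (Fin k), ((Equiv.Perm.sign ω : ℤ) : R)
        * ∏ j, f (ω j) ^ ((k - 1 - (j : ℕ)) + (k - 1 - (j : ℕ)))
      = (∏ pr ∈ Finset.univ.filter (fun pr : Fin k × Fin k => pr.1 < pr.2), (f pr.1 - f pr.2))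
        * ∏ pr ∈ Finset.univ.filter (fun pr : Fin k × Fin k => pr.1 < pr.2), (f pr.1 + f pr.2) := by
  calc ∑ ω : Equiv.Perm (Fin k), ((Equiv.Perm.sign ω : ℤ) : R)
        * ∏ j, f (ω j) ^ ((k - 1 - (j : ℕ)) + (k - 1 - (j : ℕ)))
      = ∑ ω : Equiv.Perm (Fin k), ((Equiv.Perm.sign ω : ℤ) : R)
          * ∏ j, (f (ω j) * f (ω j)) ^ (k - 1 - (j : ℕ)) := by
        refine Finset.sum_congr rfl fun ω _ => ?_
        congr 1
        exact Finset.prod_congr rfl fun j _ => by rw [mul_pow, ← pow_add]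
    _ = ∏ pr ∈ Finset.univ.filter (fun pr : Fin k × Fin k => pr.1 < pr.2),
          (f pr.1 * f pr.1 - f pr.2 * f pr.2) := myDeltaProd (fun i => f i * f i)
    _ = _ := by
        rw [← Finset.prod_mul_distrib]
        exact Finset.prod_congr rfl fun pr _ => by ring

end Aux

section MainField
variable {k : ℕ} {F : Type*} [Field F]

lemma mySign2 (ω : Equiv.Perm (Fin k)) :
    ((Equiv.Perm.sign ω : ℤ) : F) * ((Equiv.Perm.sign ω : ℤ) : F) = 1 := by
  rcases Int.units_eq_one_or (Equiv.Perm.sign ω) with h | h <;> rw [h] <;> norm_num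

lemma myMain (y : Fin k → F) (hyinj : Function.Injective y) (lam : Fin k → ℕ) :
    (∑ ω : Equiv.Perm (Fin k),
        (∏ i : Fin k, y (ω i) ^ (lam i)) *
          ∏ pr ∈ Finset.univ.filter (fun pr : Fin k × Fin k => pr.1 < pr.2),
            ((y (ω pr.1) + y (ω pr.2)) / (y (ω pr.1) - y (ω pr.2))))
        * ∏ pr ∈ Finset.univ.filter (fun pr : Fin k × Fin k => pr.1 < pr.2), (y pr.1 - y pr.2)
      = (∑ ω : Equiv.Perm (Fin k),
          ((Equiv.Perm.sign ω : ℤ) : F) * ∏ i : Fin k, y (ω i) ^ (lam i))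
        * ∏ pr ∈ Finset.univ.filter (fun pr : Fin k × Fin k => pr.1 < pr.2), (y pr.1 + y pr.2) := by
  set S := Finset.univ.filter (fun pr : Fin k × Fin k => pr.1 < pr.2) with hS
  set s : Equiv.Perm (Fin k) → F := fun ω => ((Equiv.Perm.sign ω : ℤ) : F) with hs
  set D := ∏ pr ∈ S, (y pr.1 - y pr.2) with hD
  set P := ∏ pr ∈ S, (y pr.1 + y pr.2) with hP2
  have hD0 : D ≠ 0 := by
    rw [hD]
    refine Finset.prod_ne_zero_iff.mpr fun pr hpr => ?_
    rw [hS, Finset.mem_filter] at hpr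
    exact sub_ne_zero_of_ne fun h => absurd (hyinj h) (ne_of_lt hpr.2)
  have hs2 : ∀ ω, s ω * s ω = 1 := fun ω => mySign2 ω
  have hs0 : ∀ ω, s ω ≠ 0 := fun ω h => by
    have := hs2 ω; rw [h, mul_zero] at this; exact zero_ne_one this
  have hsinv : ∀ ω, (s ω)⁻¹ = s ω := fun ω => inv_eq_of_mul_eq_one_right (hs2 ω)
  have hDen : ∀ ω : Equiv.Perm (Fin k),
      ∏ pr ∈ S, (y (ω pr.1) - y (ω pr.2)) = s ω * D := fun ω => myPermS y ω
  have hNum : ∀ ω : Equiv.Perm (Fin k),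
      ∏ pr ∈ S, (y (ω pr.1) + y (ω pr.2)) = P := by
    intro ω
    have h2 : ∏ pr ∈ S, ((y (ω pr.1) - y (ω pr.2)) * (y (ω pr.1) + y (ω pr.2)))
        = s ω * (D * P) := by
      have h3 : ∏ pr ∈ S, (y (ω pr.1) * y (ω pr.1) - y (ω pr.2) * y (ω pr.2))
          = s ω * ∏ pr ∈ S, (y pr.1 * y pr.1 - y pr.2 * y pr.2) :=
        myPermS (fun i => y i * y i) ω
      calc ∏ pr ∈ S, ((y (ω pr.1) - y (ω pr.2)) * (y (ω pr.1) + y (ω pr.2)))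
          = ∏ pr ∈ S, (y (ω pr.1) * y (ω pr.1) - y (ω pr.2) * y (ω pr.2)) :=
            Finset.prod_congr rfl fun pr _ => by ring
        _ = s ω * ∏ pr ∈ S, (y pr.1 * y pr.1 - y pr.2 * y pr.2) := h3
        _ = s ω * (D * P) := by
            congr 1
            rw [hD, hP2, ← Finset.prod_mul_distrib]
            exact Finset.prod_congr rfl fun pr _ => by ring
    rw [Finset.prod_mul_distrib, hDen ω] at h2
    have hsD : s ω * D ≠ 0 := mul_ne_zero (hs0 ω) hD0
    apply mul_left_cancel₀ hsD
    rw [h2]; ring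
  have hterm : ∀ ω : Equiv.Perm (Fin k),
      (∏ i : Fin k, y (ω i) ^ lam i) *
          ∏ pr ∈ S, ((y (ω pr.1) + y (ω pr.2)) / (y (ω pr.1) - y (ω pr.2)))
        = (s ω * ∏ i : Fin k, y (ω i) ^ lam i) * (P / D) := by
    intro ω
    rw [Finset.prod_div_distrib, hNum ω, hDen ω]
    have hfrac : P / (s ω * D) = s ω * (P / D) := by
      rw [mul_comm (s ω) D, ← div_div, div_eq_mul_inv (P / D), hsinv, mul_comm]
    rw [hfrac]; ring
  calc (∑ ω : Equiv.Perm (Fin k),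
        (∏ i : Fin k, y (ω i) ^ lam i) *
          ∏ pr ∈ S, ((y (ω pr.1) + y (ω pr.2)) / (y (ω pr.1) - y (ω pr.2)))) * D
      = (∑ ω : Equiv.Perm (Fin k), (s ω * ∏ i : Fin k, y (ω i) ^ lam i) * (P / D)) * D := by
        rw [Finset.sum_congr rfl fun ω _ => hterm ω]
    _ = (∑ ω : Equiv.Perm (Fin k), s ω * ∏ i : Fin k, y (ω i) ^ lam i) * P := by
        rw [← Finset.sum_mul, mul_assoc, div_mul_cancel₀ _ hD0]
end MainField


/-- The alternant `det(x_i^{μ_j})_{i,j} = Σ_ω sgn(ω) Π_j x_{ω(j)}^{μ_j}`. -/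
noncomputable def alt (k : ℕ) (μ : Fin k → ℕ) : MvPolynomial (Fin k) ℤ :=
  ∑ ω : Equiv.Perm (Fin k), (Equiv.Perm.sign ω : ℤ) • ∏ j : Fin k, (X (ω j)) ^ (μ j)

/-- `p` is the Schur polynomial `s_λ(x_1, …, x_k)`, characterized by
`p · det(x_i^{k-j}) = det(x_i^{λ_j + k - j})`. -/
def IsSchur (k : ℕ) (lam : Fin k → ℕ) (p : MvPolynomial (Fin k) ℤ) : Prop :=
  p * alt k (fun i => k - 1 - (i : ℕ)) = alt k (fun j => lam j + (k - 1 - (j : ℕ)))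

noncomputable abbrev ι (k : ℕ) :
    MvPolynomial (Fin k) ℤ →+* FractionRing (MvPolynomial (Fin k) ℤ) :=
  algebraMap (MvPolynomial (Fin k) ℤ) (FractionRing (MvPolynomial (Fin k) ℤ))

/-- The twisted character is the `t = -1` specialization of the Hall–Littlewood
polynomial: for a strict partition `λ` with `k` parts,
`Σ_{ω ∈ S_k} ω·( x^λ Π_{i<j} (x_i + x_j)/(x_i - x_j) ) = s_{λ-δ} · s_δ`,
as an identity of rational functions in `x_1, …, x_k` (the left-hand side is
`R_λ(x; -1)`; for strict `λ` the normalizing factor `v_λ(-1)` is `1`). -/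
theorem hall_littlewood_minus_one_eq_twisted_character (k : ℕ) (lam : Fin k → ℕ)
    (hstrict : ∀ i j : Fin k, i < j → lam j < lam i)
    (p q : MvPolynomial (Fin k) ℤ)
    (hp : IsSchur k (fun i => lam i - (k - 1 - (i : ℕ))) p)
    (hq : IsSchur k (fun i => k - 1 - (i : ℕ)) q) :
    (∑ ω : Equiv.Perm (Fin k),
        (∏ i : Fin k, (ι k (X (ω i))) ^ (lam i)) *
          ∏ pr ∈ Finset.univ.filter (fun pr : Fin k × Fin k => pr.1 < pr.2),
            ((ι k (X (ω pr.1)) + ι k (X (ω pr.2))) /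
              (ι k (X (ω pr.1)) - ι k (X (ω pr.2))))) =
      ι k p * ι k q := by

  classical
  set y : Fin k → FractionRing (MvPolynomial (Fin k) ℤ) := fun i => ι k (X i) with hy
  have hyinj : Function.Injective y := fun i j h => by
    have h2 : (X i : MvPolynomial (Fin k) ℤ) = X j :=
      IsFractionRing.injective (MvPolynomial (Fin k) ℤ)
        (FractionRing (MvPolynomial (Fin k) ℤ)) h
    exact MvPolynomial.X_injective h2
  have hD0 : (∏ pr ∈ Finset.univ.filter (fun pr : Fin k × Fin k => pr.1 < pr.2),
      (y pr.1 - y pr.2)) ≠ 0 := by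
    refine Finset.prod_ne_zero_iff.mpr fun pr hpr => ?_
    rw [Finset.mem_filter] at hpr
    exact sub_ne_zero_of_ne fun h => absurd (hyinj h) (ne_of_lt hpr.2)
  have hiota : ∀ μ : Fin k → ℕ, ι k (alt k μ)
      = ∑ ω : Equiv.Perm (Fin k),
          ((Equiv.Perm.sign ω : ℤ) : FractionRing (MvPolynomial (Fin k) ℤ))
            * ∏ j, y (ω j) ^ (μ j) := by
    intro μ
    rw [alt, map_sum]
    refine Finset.sum_congr rfl fun ω _ => ?_
    rw [zsmul_eq_mul, map_mul, map_intCast, map_prod]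
    simp only [map_pow]
    rfl
  have hdel : ∀ j : Fin k, k - 1 - (j : ℕ) ≤ lam j := by
    have key : ∀ d : ℕ, ∀ j : Fin k, k - 1 - (j : ℕ) = d → d ≤ lam j := by
      intro d
      induction d with
      | zero => intro j _; exact Nat.zero_le _
      | succ d ih =>
        intro j hj
        have hjk : (j : ℕ) + 1 < k := by omega
        have h1 := hstrict j ⟨(j : ℕ) + 1, hjk⟩ (by simp [Fin.lt_def])
        have h2 := ih ⟨(j : ℕ) + 1, hjk⟩ (by simp; omega)
        omega
    exact fun j => key _ j rfl
  have hlam : (fun j : Fin k => (lam j - (k - 1 - (j : ℕ))) + (k - 1 - (j : ℕ))) = lam :=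
    funext fun j => Nat.sub_add_cancel (hdel j)
  have hAltδ : ι k (alt k (fun i => k - 1 - (i : ℕ)))
      = ∏ pr ∈ Finset.univ.filter (fun pr : Fin k × Fin k => pr.1 < pr.2),
          (y pr.1 - y pr.2) := by
    rw [hiota]
    exact myDeltaProd y
  have hpK : ι k p * ∏ pr ∈ Finset.univ.filter (fun pr : Fin k × Fin k => pr.1 < pr.2),
      (y pr.1 - y pr.2) = ι k (alt k lam) := by
    rw [← hAltδ, ← map_mul]
    rw [IsSchur] at hp
    rw [hp]
    exact congrArg (ι k) (congrArg (alt k) hlam)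
  have hQ : ι k q = ∏ pr ∈ Finset.univ.filter (fun pr : Fin k × Fin k => pr.1 < pr.2),
      (y pr.1 + y pr.2) := by
    have hqK : ι k q * ∏ pr ∈ Finset.univ.filter (fun pr : Fin k × Fin k => pr.1 < pr.2),
        (y pr.1 - y pr.2)
        = (∏ pr ∈ Finset.univ.filter (fun pr : Fin k × Fin k => pr.1 < pr.2),
            (y pr.1 - y pr.2))
          * ∏ pr ∈ Finset.univ.filter (fun pr : Fin k × Fin k => pr.1 < pr.2),
            (y pr.1 + y pr.2) := by
      rw [IsSchur] at hq
      calc ι k q * ∏ pr ∈ Finset.univ.filter (fun pr : Fin k × Fin k => pr.1 < pr.2),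
            (y pr.1 - y pr.2)
          = ι k (q * alt k (fun i => k - 1 - (i : ℕ))) := by rw [map_mul, hAltδ]
        _ = ι k (alt k (fun j => (k - 1 - (j : ℕ)) + (k - 1 - (j : ℕ)))) := by rw [hq]
        _ = _ := by rw [hiota]; exact myDeltaProd2 y
    rw [mul_comm (∏ pr ∈ Finset.univ.filter (fun pr : Fin k × Fin k => pr.1 < pr.2),
      (y pr.1 - y pr.2)) _] at hqK
    exact mul_right_cancel₀ hD0 hqK
  apply mul_right_cancel₀ hD0
  rw [myMain y hyinj lam, ← hiota, ← hpK, hQ]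
  ring
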